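/- Under the duality between subspaces of K[x_1,...,x_n] and K[S_1,...,S_n] given by the pairing ⟨g|f⟩ = (g[f])(0), a finite-dimensional subspace V corresponds to an ideal I_V of K[S_1,...,S_n] if and only if V is translation invariant; moreover in this case V_I = {f : g[f] = 0 for all g ∈ I} and I_V = {g : g[f] = 0 for all f ∈ V}. -/

import Mathlib

open MvPolynomial

/-- The apolarity pairing `⟨g | f⟩ = (g[f])(0)`. -/
noncomputable def diffPairing {K : Type*} [Field K] {n : ℕ}
    (g f : MvPolynomial (Fin n) K) : K :=
  ∑ d ∈ g.support, g.coeff d * f.coeff d * ∏ i, (Nat.factorial (d i) : K)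

/-- The action of `g ∈ K[S_1,…,S_n]` on `f ∈ K[x_1,…,x_n]` as a differential
operator with constant coefficients (`S_i = ∂/∂x_i`): the result `g[f]`. -/
noncomputable def diffApply {K : Type*} [Field K] {n : ℕ}
    (g f : MvPolynomial (Fin n) K) : MvPolynomial (Fin n) K :=
  ∑ d ∈ g.support, g.coeff d •
    ((List.ofFn fun i : Fin n =>
      (((MvPolynomial.pderiv i).toLinearMap :
          Module.End K (MvPolynomial (Fin n) K)) ^ d i)).prod f)

section ListLemmas

variable {M : Type*} [Monoid M]

theorem ofFn_prod_mul : ∀ {m : ℕ} (F G : Fin m → M), (∀ i j, Commute (F i) (G j)) →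
    (List.ofFn fun i => F i * G i).prod = (List.ofFn F).prod * (List.ofFn G).prod := by
  intro m
  induction m with
  | zero => intro F G _; simp
  | succ m ih =>
    intro F G hc
    rw [List.ofFn_succ, List.ofFn_succ, List.ofFn_succ, List.prod_cons, List.prod_cons,
      List.prod_cons]
    have hrest : (List.ofFn fun i : Fin m => F i.succ * G i.succ).prod
        = (List.ofFn fun i : Fin m => F i.succ).prod * (List.ofFn fun i : Fin m => G i.succ).prod :=
      ih _ _ fun i j => hc i.succ j.succ
    rw [hrest]
    have hb : Commute (G 0) (List.ofFn fun i : Fin m => F i.succ).prod := by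
      refine Commute.list_prod_right _ _ fun x hx => ?_
      rw [List.mem_ofFn] at hx
      obtain ⟨j, rfl⟩ := hx
      exact (hc j.succ 0).symm
    rw [mul_assoc (F 0), ← mul_assoc (G 0), hb.eq,
      mul_assoc _ (G 0), ← mul_assoc (F 0)]

theorem ofFn_prod_eq_single : ∀ {m : ℕ} (F : Fin m → M) (i : Fin m),
    (∀ j, j ≠ i → F j = 1) → (List.ofFn F).prod = F i := by
  intro m
  induction m with
  | zero => intro _ i; exact i.elim0
  | succ m ih =>
    intro F i h
    rw [List.ofFn_succ, List.prod_cons]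
    induction i using Fin.cases with
    | zero =>
      have : (List.ofFn fun j : Fin m => F j.succ).prod = 1 := by
        refine List.prod_eq_one fun x hx => ?_
        rw [List.mem_ofFn] at hx
        obtain ⟨j, rfl⟩ := hx
        exact h j.succ (Fin.succ_ne_zero j)
      rw [this, mul_one]
    | succ i' =>
      rw [h 0 (Fin.succ_ne_zero i').symm, one_mul]
      exact ih (fun j => F j.succ) i' fun j hj => h j.succ (by
        simpa [Fin.succ_inj] using hj)

end ListLemmas

section Core
variable {K : Type*} [Field K] {n : ℕ}

noncomputable def wK (K : Type*) [Field K] {n : ℕ} (d : Fin n →₀ ℕ) : K :=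
  ∏ i, (Nat.factorial (d i) : K)

noncomputable def AE (K : Type*) [Field K] {n : ℕ} (i : Fin n) :
    Module.End K (MvPolynomial (Fin n) K) := (MvPolynomial.pderiv i).toLinearMap

noncomputable def PE (K : Type*) [Field K] {n : ℕ} (d : Fin n →₀ ℕ) :
    Module.End K (MvPolynomial (Fin n) K) :=
  (List.ofFn fun i : Fin n =>
      (((MvPolynomial.pderiv i).toLinearMap :
          Module.End K (MvPolynomial (Fin n) K)) ^ d i)).prod

theorem wK_zero : wK K (0 : Fin n →₀ ℕ) = 1 := by
  simp [wK]

theorem wK_ne_zero [CharZero K] (d : Fin n →₀ ℕ) : wK K d ≠ 0 := by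
  refine Finset.prod_ne_zero_iff.mpr fun i _ => ?_
  exact_mod_cast (Nat.factorial_ne_zero (d i))

theorem wK_add_single (e : Fin n →₀ ℕ) (i : Fin n) :
    wK K (e + Finsupp.single i 1) = ((e i : K) + 1) * wK K e := by
  unfold wK
  rw [← Finset.mul_prod_erase Finset.univ _ (Finset.mem_univ i),
    ← Finset.mul_prod_erase Finset.univ (fun j => (Nat.factorial (e j) : K)) (Finset.mem_univ i)]
  have h1 : ∀ j ∈ Finset.univ.erase i,
      ((Nat.factorial ((e + Finsupp.single i 1 : Fin n →₀ ℕ) j) : K)) = (Nat.factorial (e j) : K) := by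
    intro j hj
    rw [Finsupp.add_apply, Finsupp.single_apply, if_neg (Finset.ne_of_mem_erase hj).symm,
      add_zero]
  rw [Finset.prod_congr rfl h1]
  have h2 : (e + Finsupp.single i 1 : Fin n →₀ ℕ) i = e i + 1 := by
    rw [Finsupp.add_apply, Finsupp.single_apply, if_pos rfl]
  rw [h2, Nat.factorial_succ]
  push_cast
  ring

theorem coeff_pderiv (i : Fin n) (f : MvPolynomial (Fin n) K) (m : Fin n →₀ ℕ) :
    (MvPolynomial.pderiv i f).coeff m
      = ((m i : K) + 1) * f.coeff (m + Finsupp.single i 1) := by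
  induction f using MvPolynomial.induction_on' with
  | monomial s a =>
    rw [pderiv_monomial, coeff_monomial, coeff_monomial]
    by_cases h2 : s = m + Finsupp.single i 1
    · subst h2
      rw [if_pos (by rw [add_tsub_cancel_right])]
      have : (m + Finsupp.single i 1 : Fin n →₀ ℕ) i = m i + 1 := by
        rw [Finsupp.add_apply, Finsupp.single_apply, if_pos rfl]
      rw [this, if_pos rfl]
      push_cast
      ring
    · rw [if_neg h2, mul_zero]
      by_cases h1 : s - Finsupp.single i 1 = m
      · rw [if_pos h1]
        by_cases hsi : s i = 0
        · rw [hsi]; push_cast; ring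
        · exfalso
          apply h2
          rw [← h1, tsub_add_cancel_of_le]
          rw [Finsupp.single_le_iff]
          omega
      · rw [if_neg h1]
  | add p q hp hq =>
    rw [map_add, coeff_add, coeff_add, hp, hq]
    ring

theorem AE_comm (i j : Fin n) : Commute (AE K i) (AE K (n := n) j) := by
  refine LinearMap.ext fun f => ?_
  show MvPolynomial.pderiv i (MvPolynomial.pderiv j f) =
    MvPolynomial.pderiv j (MvPolynomial.pderiv i f)
  apply MvPolynomial.ext
  intro m
  rw [_root_.coeff_pderiv, _root_.coeff_pderiv, _root_.coeff_pderiv, _root_.coeff_pderiv]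
  by_cases hij : i = j
  · subst hij; ring
  · have hji : j ≠ i := fun h => hij h.symm
    rw [Finsupp.add_apply, Finsupp.add_apply, Finsupp.single_apply, if_neg hij,
      Finsupp.single_apply, if_neg hji, add_zero, add_zero, add_right_comm]
    ring
end Core
section PLemmas
variable {K : Type*} [Field K] {n : ℕ}

theorem PE_zero : PE K (0 : Fin n →₀ ℕ) = 1 := by
  refine List.prod_eq_one fun x hx => ?_
  rw [List.mem_ofFn] at hx
  obtain ⟨j, rfl⟩ := hx
  simp

theorem PE_add (c d : Fin n →₀ ℕ) : PE K (c + d) = PE K c * PE K d := by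
  unfold PE
  have : (List.ofFn fun i : Fin n =>
      (((MvPolynomial.pderiv i).toLinearMap :
          Module.End K (MvPolynomial (Fin n) K)) ^ (c + d) i))
      = List.ofFn fun i : Fin n =>
      (((MvPolynomial.pderiv i).toLinearMap :
          Module.End K (MvPolynomial (Fin n) K)) ^ c i) *
      (((MvPolynomial.pderiv i).toLinearMap :
          Module.End K (MvPolynomial (Fin n) K)) ^ d i) := by
    refine congrArg List.ofFn (funext fun i => ?_)
    rw [Finsupp.add_apply, pow_add]
  rw [this]
  exact ofFn_prod_mul _ _ fun i j => (AE_comm i j).pow_pow _ _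

theorem PE_single (i : Fin n) (k : ℕ) : PE K (Finsupp.single i k) = AE K i ^ k := by
  unfold PE
  have := ofFn_prod_eq_single (fun j : Fin n =>
      (((MvPolynomial.pderiv j).toLinearMap :
          Module.End K (MvPolynomial (Fin n) K)) ^ (Finsupp.single i k) j)) i ?_
  · rw [this, Finsupp.single_eq_same]
    rfl
  · intro j hj
    rw [Finsupp.single_apply, if_neg fun h => hj h.symm, pow_zero]

theorem PE_core (d : Fin n →₀ ℕ) : ∀ (e : Fin n →₀ ℕ) (f : MvPolynomial (Fin n) K),
    (PE K d f).coeff e * wK K e = f.coeff (e + d) * wK K (e + d) := by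
  induction d using Finsupp.induction with
  | zero => intro e f; rw [PE_zero, add_zero]; rfl
  | single_add a b d' ha hb ih =>
    have step1 : ∀ (d'' : Fin n →₀ ℕ),
        (∀ (e : Fin n →₀ ℕ) (f : MvPolynomial (Fin n) K),
          (PE K d'' f).coeff e * wK K e = f.coeff (e + d'') * wK K (e + d'')) →
        ∀ (e : Fin n →₀ ℕ) (f : MvPolynomial (Fin n) K),
          (PE K (Finsupp.single a 1 + d'') f).coeff e * wK K e
            = f.coeff (e + (Finsupp.single a 1 + d''))
              * wK K (e + (Finsupp.single a 1 + d'')) := by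
      intro d'' ih' e f
      rw [PE_add, PE_single, pow_one]
      have happ : (AE K a * PE K d'') f = MvPolynomial.pderiv a (PE K d'' f) := rfl
      rw [happ, _root_.coeff_pderiv]
      have : ((e a : K) + 1) * (PE K d'' f).coeff (e + Finsupp.single a 1) * wK K e
          = (PE K d'' f).coeff (e + Finsupp.single a 1) * (((e a : K) + 1) * wK K e) := by ring
      rw [this, ← wK_add_single, ih', add_assoc]
    have aux : ∀ (k : ℕ),
        ∀ (e : Fin n →₀ ℕ) (f : MvPolynomial (Fin n) K),
          (PE K (Finsupp.single a k + d') f).coeff e * wK K e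
            = f.coeff (e + (Finsupp.single a k + d'))
              * wK K (e + (Finsupp.single a k + d')) := by
      intro k
      induction k with
      | zero => simpa using ih
      | succ k ihk =>
        have hsplit : Finsupp.single a (k + 1) + d'
            = Finsupp.single a 1 + (Finsupp.single a k + d') := by
          rw [← add_assoc, ← Finsupp.single_add, add_comm k 1]
        rw [hsplit]
        exact step1 _ ihk
    exact aux b
end PLemmas

section PairingLemmas
variable {K : Type*} [Field K] {n : ℕ}

theorem pairing_superset {T : Finset (Fin n →₀ ℕ)} {g : MvPolynomial (Fin n) K}
    (hT : g.support ⊆ T) (f : MvPolynomial (Fin n) K) :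
    diffPairing g f = ∑ d ∈ T, g.coeff d * f.coeff d * wK K d := by
  refine Finset.sum_subset hT fun x _ hx => ?_
  rw [MvPolynomial.notMem_support_iff.mp hx, zero_mul, zero_mul]

theorem apply_superset {T : Finset (Fin n →₀ ℕ)} {g : MvPolynomial (Fin n) K}
    (hT : g.support ⊆ T) (f : MvPolynomial (Fin n) K) :
    diffApply g f = ∑ d ∈ T, g.coeff d • PE K d f := by
  refine Finset.sum_subset hT fun x _ hx => ?_
  rw [MvPolynomial.notMem_support_iff.mp hx, zero_smul]

theorem pairing_zero_left (f : MvPolynomial (Fin n) K) : diffPairing 0 f = 0 := by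
  simp [diffPairing]

theorem pairing_monomial (d : Fin n →₀ ℕ) (c : K) (f : MvPolynomial (Fin n) K) :
    diffPairing (MvPolynomial.monomial d c) f = c * f.coeff d * wK K d := by
  classical
  by_cases hc : c = 0
  · subst hc
    rw [map_zero, pairing_zero_left, zero_mul, zero_mul]
  · rw [pairing_superset (T := {d}) (by rw [MvPolynomial.support_monomial, if_neg hc]),
      Finset.sum_singleton, MvPolynomial.coeff_monomial, if_pos rfl]

theorem apply_monomial (d : Fin n →₀ ℕ) (c : K) (f : MvPolynomial (Fin n) K) :
    diffApply (MvPolynomial.monomial d c) f = c • PE K d f := by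
  classical
  by_cases hc : c = 0
  · subst hc
    rw [map_zero, zero_smul]
    simp [diffApply]
  · rw [apply_superset (T := {d}) (by rw [MvPolynomial.support_monomial, if_neg hc]),
      Finset.sum_singleton, MvPolynomial.coeff_monomial, if_pos rfl]

theorem pairing_add_left (g g' f : MvPolynomial (Fin n) K) :
    diffPairing (g + g') f = diffPairing g f + diffPairing g' f := by
  classical
  rw [pairing_superset (MvPolynomial.support_add) f,
    pairing_superset (T := g.support ∪ g'.support) Finset.subset_union_left f,
    pairing_superset (T := g.support ∪ g'.support) Finset.subset_union_right f,
    ← Finset.sum_add_distrib]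
  refine Finset.sum_congr rfl fun d _ => ?_
  rw [MvPolynomial.coeff_add]
  ring

theorem apply_add_left (g g' f : MvPolynomial (Fin n) K) :
    diffApply (g + g') f = diffApply g f + diffApply g' f := by
  classical
  rw [apply_superset (MvPolynomial.support_add) f,
    apply_superset (T := g.support ∪ g'.support) Finset.subset_union_left f,
    apply_superset (T := g.support ∪ g'.support) Finset.subset_union_right f,
    ← Finset.sum_add_distrib]
  refine Finset.sum_congr rfl fun d _ => ?_
  rw [MvPolynomial.coeff_add, add_smul]

theorem pairing_smul_left (c : K) (g f : MvPolynomial (Fin n) K) :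
    diffPairing (c • g) f = c * diffPairing g f := by
  rw [pairing_superset (MvPolynomial.support_smul) f, diffPairing, Finset.mul_sum]
  refine Finset.sum_congr rfl fun d _ => ?_
  rw [MvPolynomial.coeff_smul, smul_eq_mul]
  unfold wK
  ring

theorem pairing_add_right (g f f' : MvPolynomial (Fin n) K) :
    diffPairing g (f + f') = diffPairing g f + diffPairing g f' := by
  unfold diffPairing
  rw [← Finset.sum_add_distrib]
  refine Finset.sum_congr rfl fun d _ => ?_
  rw [MvPolynomial.coeff_add]
  ring

theorem pairing_sum_left {α : Type*} (s : Finset α) (G : α → MvPolynomial (Fin n) K)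
    (f : MvPolynomial (Fin n) K) :
    diffPairing (∑ a ∈ s, G a) f = ∑ a ∈ s, diffPairing (G a) f := by
  classical
  induction s using Finset.induction with
  | empty => simp [pairing_zero_left]
  | insert _ _ h ih =>
    rw [Finset.sum_insert h, Finset.sum_insert h, pairing_add_left, ih]

theorem key (i : Fin n) (g f : MvPolynomial (Fin n) K) :
    diffPairing (MvPolynomial.X i * g) f = diffPairing g (MvPolynomial.pderiv i f) := by
  induction g using MvPolynomial.induction_on' with
  | monomial d c =>
    rw [show (MvPolynomial.X i * MvPolynomial.monomial d c : MvPolynomial (Fin n) K)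
        = MvPolynomial.monomial (d + Finsupp.single i 1) c by
      rw [MvPolynomial.X, MvPolynomial.monomial_mul, one_mul, add_comm]]
    rw [pairing_monomial, pairing_monomial, _root_.coeff_pderiv, wK_add_single]
    ring
  | add p q hp hq =>
    rw [mul_add, pairing_add_left, pairing_add_left, hp, hq]

theorem key2 (h g f : MvPolynomial (Fin n) K) :
    diffPairing h (diffApply g f) = diffPairing (h * g) f := by
  induction g using MvPolynomial.induction_on' with
  | monomial d a =>
    induction h using MvPolynomial.induction_on' with
    | monomial e c =>
      rw [apply_monomial, MvPolynomial.monomial_mul, pairing_monomial, pairing_monomial,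
        MvPolynomial.coeff_smul, smul_eq_mul]
      have := PE_core (K := K) d e f
      calc c * (a * (PE K d f).coeff e) * wK K e
          = c * a * ((PE K d f).coeff e * wK K e) := by ring
        _ = c * a * (f.coeff (e + d) * wK K (e + d)) := by rw [this]
        _ = c * a * f.coeff (e + d) * wK K (e + d) := by ring
    | add p q hp hq =>
      rw [pairing_add_left, add_mul, pairing_add_left, hp, hq]
  | add p q hp hq =>
    rw [apply_add_left, pairing_add_right, mul_add, pairing_add_left, hp, hq]

theorem pairing_eq_coeff_zero (g f : MvPolynomial (Fin n) K) :
    diffPairing g f = (diffApply g f).coeff 0 := by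
  have h2 := key2 1 g f
  rw [one_mul] at h2
  rw [← h2, show (1 : MvPolynomial (Fin n) K) = MvPolynomial.monomial 0 1 by
    rw [MvPolynomial.monomial_zero', map_one], pairing_monomial, wK_zero]
  ring

theorem mul_perp (V : Submodule K (MvPolynomial (Fin n) K))
    (hV : ∀ i : Fin n, ∀ f ∈ V, MvPolynomial.pderiv i f ∈ V)
    (g : MvPolynomial (Fin n) K) (hg : ∀ f ∈ V, diffPairing g f = 0)
    (h : MvPolynomial (Fin n) K) : ∀ f ∈ V, diffPairing (h * g) f = 0 := by
  induction h using MvPolynomial.induction_on with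
  | C a =>
    intro f hf
    rw [MvPolynomial.C_mul', pairing_smul_left, hg f hf, mul_zero]
  | add p q hp hq =>
    intro f hf
    rw [add_mul, pairing_add_left, hp f hf, hq f hf, add_zero]
  | mul_X p i hp =>
    intro f hf
    rw [show p * MvPolynomial.X i * g = MvPolynomial.X i * (p * g) by ring, key]
    exact hp (MvPolynomial.pderiv i f) (hV i f hf)

end PairingLemmas
section Biperp
variable {K : Type*} [Field K] [CharZero K] {n : ℕ}

theorem support_subset_of_mem_span {s : Finset (MvPolynomial (Fin n) K)}
    {f : MvPolynomial (Fin n) K} (hf : f ∈ Submodule.span K (s : Set (MvPolynomial (Fin n) K))) :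
    f.support ⊆ s.sup MvPolynomial.support := by
  classical
  induction hf using Submodule.span_induction with
  | mem x hx => exact Finset.le_sup (f := MvPolynomial.support) (Finset.mem_coe.mp hx)
  | zero => rw [MvPolynomial.support_zero]; exact Finset.empty_subset _
  | add x y _ _ hx hy =>
    exact MvPolynomial.support_add.trans (Finset.union_subset hx hy)
  | smul c x _ hx => exact MvPolynomial.support_smul.trans hx

theorem biperp (V : Submodule K (MvPolynomial (Fin n) K)) [FiniteDimensional K V]
    (f₀ : MvPolynomial (Fin n) K)
    (h : ∀ g, (∀ f ∈ V, diffPairing g f = 0) → diffPairing g f₀ = 0) : f₀ ∈ V := by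
  classical
  by_contra hf₀
  obtain ⟨s, hs⟩ := (Submodule.fg_iff_finiteDimensional V).mpr ‹_›
  obtain ⟨ψ, hψ⟩ :=
    ((LinearPMap.supSpanSingleton (⟨V, 0⟩ : MvPolynomial (Fin n) K →ₗ.[K] K) f₀ 1
      hf₀).toFun).exists_extend
  have hψV : ∀ f ∈ V, ψ f = 0 := by
    intro f hf
    have h1 := LinearPMap.supSpanSingleton_apply_mk
      (⟨V, 0⟩ : MvPolynomial (Fin n) K →ₗ.[K] K) f₀ 1 hf₀ f hf 0
    have h2 := (LinearMap.congr_fun hψ _).trans h1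
    rw [LinearMap.comp_apply, Submodule.subtype_apply] at h2
    simpa using h2
  have hψ0 : ψ f₀ = 1 := by
    have h1 := LinearPMap.supSpanSingleton_apply_mk
      (⟨V, 0⟩ : MvPolynomial (Fin n) K →ₗ.[K] K) f₀ 1 hf₀ 0 V.zero_mem 1
    have h2 := (LinearMap.congr_fun hψ _).trans h1
    rw [LinearMap.comp_apply, Submodule.subtype_apply] at h2
    simpa using h2
  set T : Finset (Fin n →₀ ℕ) := f₀.support ∪ s.sup MvPolynomial.support with hT
  have hTV : ∀ f ∈ V, f.support ⊆ T := by
    intro f hf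
    refine (support_subset_of_mem_span ?_).trans Finset.subset_union_right
    rw [hs]; exact hf
  set g : MvPolynomial (Fin n) K :=
    ∑ e ∈ T, MvPolynomial.monomial e (ψ (MvPolynomial.monomial e 1) / wK K e) with hg
  have hgf : ∀ f : MvPolynomial (Fin n) K, f.support ⊆ T → diffPairing g f = ψ f := by
    intro f hf
    rw [hg, pairing_sum_left]
    have : ∀ e ∈ T, diffPairing
        (MvPolynomial.monomial e (ψ (MvPolynomial.monomial e 1) / wK K e)) f
        = f.coeff e * ψ (MvPolynomial.monomial e 1) := by
      intro e _
      rw [pairing_monomial]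
      field_simp [wK_ne_zero]
    rw [Finset.sum_congr rfl this]
    have hfs : ∑ e ∈ T, MvPolynomial.monomial e (f.coeff e) = f := by
      rw [← Finset.sum_subset hf (fun x _ hx => by
        rw [MvPolynomial.notMem_support_iff.mp hx, map_zero])]
      exact MvPolynomial.support_sum_monomial_coeff f
    conv_rhs => rw [← hfs]
    rw [map_sum]
    refine Finset.sum_congr rfl fun e _ => ?_
    rw [show (MvPolynomial.monomial e (f.coeff e) : MvPolynomial (Fin n) K)
      = f.coeff e • MvPolynomial.monomial e 1 by rw [MvPolynomial.smul_monomial, smul_eq_mul, mul_one],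
      map_smul, smul_eq_mul]
  have hgV : ∀ f ∈ V, diffPairing g f = 0 := fun f hf => (hgf f (hTV f hf)).trans (hψV f hf)
  have hcontr := h g hgV
  rw [hgf f₀ (hT ▸ Finset.subset_union_left), hψ0] at hcontr
  exact one_ne_zero hcontr

end Biperp

/-- Under the duality given by the pairing `⟨g|f⟩ = (g[f])(0)`, a
finite-dimensional subspace `V ⊆ K[x_1,…,x_n]` corresponds to an *ideal* `I_V`
of `K[S_1,…,S_n]` if and only if `V` is translation invariant; moreover in this
case `V_I = {f : g[f] = 0 ∀ g ∈ I}` and `I_V = {g : g[f] = 0 ∀ f ∈ V}`. -/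
theorem dual_is_ideal_iff_translation_invariant
    {K : Type*} [Field K] [CharZero K] {n : ℕ}
    (V : Submodule K (MvPolynomial (Fin n) K)) [FiniteDimensional K V] :
    ((∃ I : Ideal (MvPolynomial (Fin n) K),
        (I : Set (MvPolynomial (Fin n) K)) = {g | ∀ f ∈ V, diffPairing g f = 0}) ↔
      (∀ i : Fin n, ∀ f ∈ V, MvPolynomial.pderiv i f ∈ V)) ∧
    ((∀ i : Fin n, ∀ f ∈ V, MvPolynomial.pderiv i f ∈ V) →
      ({g | ∀ f ∈ V, diffPairing g f = 0}
          = {g | ∀ f ∈ V, diffApply g f = 0} ∧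
       ∀ I : Ideal (MvPolynomial (Fin n) K),
         {f | ∀ g ∈ I, diffPairing g f = 0}
            = {f | ∀ g ∈ I, diffApply g f = 0})) := by
  have happly : ∀ g f : MvPolynomial (Fin n) K, diffApply g f =
      ∑ d ∈ g.support, g.coeff d • PE K d f := fun _ _ => rfl
  constructor
  · constructor
    · rintro ⟨I, hI⟩ i f hf
      refine biperp V _ fun g hg => ?_
      have hgI : g ∈ I := by
        rw [← SetLike.mem_coe, hI]; exact hg
      have hXg : MvPolynomial.X i * g ∈ I := I.mul_mem_left _ hgI
      have hXg' : ∀ f' ∈ V, diffPairing (MvPolynomial.X i * g) f' = 0 := by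
        have := hI ▸ (SetLike.mem_coe.mpr hXg)
        exact this
      rw [← key]
      exact hXg' f hf
    · intro hV
      refine ⟨{
        carrier := {g | ∀ f ∈ V, diffPairing g f = 0}
        add_mem' := fun {a b} ha hb f hf => by
          rw [pairing_add_left, ha f hf, hb f hf, add_zero]
        zero_mem' := fun f _ => pairing_zero_left f
        smul_mem' := fun c x hx f hf => by
          rw [smul_eq_mul]
          exact mul_perp V hV x hx c f hf }, rfl⟩
  · intro hV
    constructor
    · ext g
      simp only [Set.mem_setOf_eq]
      constructor
      · intro hg f hf
        apply MvPolynomial.ext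
        intro m
        have h1 := key2 (MvPolynomial.monomial m 1) g f
        rw [pairing_monomial, one_mul,
          mul_perp V hV g hg (MvPolynomial.monomial m 1) f hf] at h1
        rw [MvPolynomial.coeff_zero]
        exact (mul_eq_zero.mp h1).resolve_right (wK_ne_zero m)
      · intro hg f hf
        rw [pairing_eq_coeff_zero, hg f hf, MvPolynomial.coeff_zero]
    · intro I
      ext f
      simp only [Set.mem_setOf_eq]
      constructor
      · intro hf g hg
        apply MvPolynomial.ext
        intro m
        have h1 := key2 (MvPolynomial.monomial m 1) g f
        rw [pairing_monomial, one_mul,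
          hf _ (I.mul_mem_left (MvPolynomial.monomial m 1) hg)] at h1
        rw [MvPolynomial.coeff_zero]
        exact (mul_eq_zero.mp h1).resolve_right (wK_ne_zero m)
      · intro hf g hg
        rw [pairing_eq_coeff_zero, hf g hg, MvPolynomial.coeff_zero]
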